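/- arXiv:2512.01520 — 7 statements merged into one kernel-verified Lean document; each statement's English description precedes it below -/
import Mathlib

section
/- Let R be a principal ideal domain with a ring automorphism σ such that for every irreducible z ∈ R and every n ≥ 1, σ^n(z) is not an associate of z. Let a ∈ R be nonzero, let d be the number of irreducible factors of a counted with multiplicity, let p be a divisor of a, and set q = σ(a/p). Then every strictly increasing chain I₀ ⊊ I₁ ⊊ ⋯ ⊊ I_m of (p,q)-invariant ideals of R satisfies 4·(m − 1) ≤ d². -/
open UniqueFactorizationMonoid Multiset

open scoped Classical
set_option linter.unusedSectionVars false
set_option linter.unusedVariables false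
set_option maxHeartbeats 1000000

section Aux

variable {R : Type*} [CommRing R] [IsDomain R] [IsPrincipalIdealRing R]
  [NormalizationMonoid R]

/-- The number of irreducible factors of `x` associated to `z`. -/
noncomputable def vA (z x : R) : ℕ :=
  (normalizedFactors x).count (normalize z)

lemma vA_def (z x : R) : vA z x = (normalizedFactors x).count (normalize z) := rfl

lemma vA_assoc {z z' : R} (h : Associated z z') (x : R) : vA z x = vA z' x := by
  unfold vA
  rw [normalize_eq_normalize h.dvd h.symm.dvd]

lemma vA_mul (z : R) {x y : R} (hx : x ≠ 0) (hy : y ≠ 0) :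
    vA z (x * y) = vA z x + vA z y := by
  unfold vA
  rw [normalizedFactors_mul hx hy, Multiset.count_add]

lemma vA_le_of_dvd (z : R) {x y : R} (h : x ∣ y) (hy : y ≠ 0) : vA z x ≤ vA z y := by
  obtain ⟨c, rfl⟩ := h
  have hx : x ≠ 0 := left_ne_zero_of_mul hy
  have hc : c ≠ 0 := right_ne_zero_of_mul hy
  rw [vA_mul z hx hc]
  omega

lemma one_le_vA {z x : R} (hz : Irreducible z) (hx : x ≠ 0) (h : z ∣ x) : 1 ≤ vA z x := by
  obtain ⟨e, he, hassoc⟩ := exists_mem_normalizedFactors_of_dvd hx hz h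
  unfold vA
  rw [normalize_eq_normalize hassoc.dvd hassoc.symm.dvd, normalize_normalized_factor e he]
  exact Multiset.one_le_count_iff_mem.2 he

lemma vA_eq_card_filter (u : R) (x : R) :
    vA u x = ((normalizedFactors x).filter (fun e => Associated u e)).card := by
  unfold vA
  rw [Multiset.count_eq_card_filter_eq]
  congr 1
  apply Multiset.filter_congr
  intro e he
  constructor
  · rintro rfl
    exact (associated_normalize u).symm.symm
  · intro h
    rw [← normalize_normalized_factor e he]
    exact normalize_eq_normalize h.dvd h.symm.dvd

lemma card_filter_eq_of_rel {s t : Multiset R} (h : Multiset.Rel Associated s t) (u : R) :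
    (s.filter (fun e => Associated u e)).card = (t.filter (fun e => Associated u e)).card := by
  induction h with
  | zero => rfl
  | @cons a b as bs hab _ ih =>
    rw [Multiset.filter_cons, Multiset.filter_cons, Multiset.card_add, Multiset.card_add, ih]
    have : Associated u a ↔ Associated u b := ⟨fun h' => h'.trans hab, fun h' => h'.trans hab.symm⟩
    by_cases hua : Associated u a
    · rw [if_pos hua, if_pos (this.1 hua)]
      simp
    · rw [if_neg hua, if_neg (fun hub => hua (this.2 hub))]

lemma rel_nf_map (τ : R ≃+* R) {x : R} (hx : x ≠ 0) :
    Multiset.Rel Associated (normalizedFactors (τ x)) ((normalizedFactors x).map τ) := by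
  have hx' : τ x ≠ 0 := fun h => hx (by simpa using congrArg τ.symm h)
  apply UniqueFactorizationMonoid.factors_unique
  · exact fun e he => irreducible_of_normalized_factor e he
  · intro e he
    obtain ⟨e', he', rfl⟩ := Multiset.mem_map.1 he
    have h1 : Irreducible e' := irreducible_of_normalized_factor e' he'
    exact (MulEquiv.irreducible_iff τ.toMulEquiv).2 h1
  · refine (prod_normalizedFactors hx').trans ?_
    rw [← map_multiset_prod]
    exact ((prod_normalizedFactors hx).symm).map τ

lemma vA_map (τ : R ≃+* R) (z : R) {x : R} (hx : x ≠ 0) : vA (τ z) (τ x) = vA z x := by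
  rw [vA_eq_card_filter, vA_eq_card_filter, card_filter_eq_of_rel (rel_nf_map τ hx)]
  rw [Multiset.filter_map, Multiset.card_map]
  congr 1
  apply Multiset.filter_congr
  intro e _
  constructor
  · intro h
    have := h.map τ.symm.toMulEquiv
    simpa using this
  · intro h
    exact h.map τ.toMulEquiv

-- power application helpers for RingAut
lemma pow_apply_add (τ : R ≃+* R) (n m : ℕ) (x : R) :
    (τ ^ (n + m)) x = (τ ^ n) ((τ ^ m) x) := by
  rw [pow_add]; rfl

lemma pow_apply_succ (τ : R ≃+* R) (n : ℕ) (x : R) :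
    (τ ^ (n + 1)) x = τ ((τ ^ n) x) := by
  rw [pow_succ']; rfl

lemma pow_apply_zero (τ : R ≃+* R) (x : R) : (τ ^ (0 : ℕ)) x = x := by
  rw [pow_zero]; rfl

lemma inv_pow_apply_pow (τ : R ≃+* R) (n : ℕ) (x : R) :
    ((τ⁻¹) ^ n) ((τ ^ n) x) = x := by
  rw [inv_pow]
  show ((τ ^ n)⁻¹ * (τ ^ n)) x = x
  rw [inv_mul_cancel]; rfl

lemma pow_apply_inv_pow (τ : R ≃+* R) (n : ℕ) (x : R) :
    (τ ^ n) (((τ⁻¹) ^ n) x) = x := by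
  rw [inv_pow]
  show ((τ ^ n) * (τ ^ n)⁻¹) x = x
  rw [mul_inv_cancel]; rfl

-- cancel an automorphism from an association
lemma assoc_cancel (τ : R ≃+* R) {x y : R} (h : Associated (τ x) (τ y)) : Associated x y := by
  have := h.map τ.symm.toMulEquiv
  simpa using this

lemma orbit_inj (τ : R ≃+* R)
    (horb : ∀ z : R, Irreducible z → ∀ n : ℕ, 1 ≤ n → ¬ Associated ((τ ^ n) z) z)
    {y : R} (hy : Irreducible y) {n m : ℕ} (h : Associated ((τ ^ n) y) ((τ ^ m) y)) :
    n = m := by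
  rcases le_or_gt n m with hnm | hnm
  · by_contra hne
    have hd : m = (m - n) + n := by omega
    have : Associated ((τ ^ (m - n)) y) y := by
      apply assoc_cancel (τ ^ n)
      have hnm2 : n + (m - n) = m := by omega
      have h2 : (τ ^ m) y = (τ ^ n) ((τ ^ (m - n)) y) := by
        rw [← pow_apply_add, hnm2]
      rw [← h2]
      exact h.symm
    exact horb y hy (m - n) (by omega) this
  · exfalso
    have hd : n = (n - m) + m := by omega
    have : Associated ((τ ^ (n - m)) y) y := by
      apply assoc_cancel (τ ^ m)
      have hnm2 : m + (n - m) = n := by omega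
      have h2 : (τ ^ n) y = (τ ^ m) ((τ ^ (n - m)) y) := by
        rw [← pow_apply_add, hnm2]
      rw [← h2]
      exact h
    exact horb y hy (n - m) (by omega) this

/-- one step of the invariance inequality -/
lemma vA_step {τ : R ≃+* R} {b w : R} (hb : b ≠ 0) (hw : w ≠ 0) (hdvd : w ∣ τ⁻¹ w * b)
    (x : R) : vA x w ≤ vA (τ x) w + vA x b := by
  have hτw : τ⁻¹ w ≠ 0 := by
    intro h
    apply hw
    have h' : τ.symm w = 0 := h
    rw [← τ.apply_symm_apply w, h']
    exact τ.map_zero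
  have h1 : vA x w ≤ vA x (τ⁻¹ w * b) := vA_le_of_dvd x hdvd (mul_ne_zero hτw hb)
  have h2 : vA x (τ⁻¹ w * b) = vA x (τ⁻¹ w) + vA x b := vA_mul x hτw hb
  have h3 : vA x (τ⁻¹ w) = vA (τ x) w := by
    have := vA_map τ x hτw
    rw [show τ (τ⁻¹ w) = w from τ.apply_symm_apply w] at this
    omega
  omega

/-- partial sums of multiplicities of `b` along the forward `τ`-orbit of `y` -/
noncomputable def Gv (τ : R ≃+* R) (b y : R) (N : ℕ) : ℕ :=
  ∑ n ∈ Finset.range N, vA ((τ ^ n) y) b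

lemma Gv_add (τ : R ≃+* R) (b y : R) (N M : ℕ) :
    Gv τ b y (N + M) = Gv τ b y N + ∑ n ∈ Finset.range M, vA ((τ ^ (N + n)) y) b := by
  unfold Gv
  rw [Finset.sum_range_add]

lemma vA_iter {τ : R ≃+* R} {b w : R} (hb : b ≠ 0) (hw : w ≠ 0) (hdvd : w ∣ τ⁻¹ w * b)
    (y : R) : ∀ N : ℕ, vA y w ≤ vA ((τ ^ N) y) w + Gv τ b y N := by
  intro N
  induction N with
  | zero =>
    rw [pow_apply_zero]
    simp [Gv]
  | succ n ih =>
    have hstep := vA_step hb hw hdvd ((τ ^ n) y)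
    rw [← pow_apply_succ] at hstep
    have : Gv τ b y (n + 1) = Gv τ b y n + vA ((τ ^ n) y) b := by
      unfold Gv; rw [Finset.sum_range_succ]
    omega

lemma sum_count_le (s : Multiset R) (G : Finset R) :
    ∑ x ∈ G, s.count x ≤ Multiset.card s := by
  classical
  have h1 : ∑ x ∈ G, s.count x = ∑ x ∈ G ∩ s.toFinset, s.count x := by
    apply (Finset.sum_subset (Finset.inter_subset_left) _).symm
    intro x hx hnx
    rw [Multiset.count_eq_zero]
    intro hmem
    exact hnx (Finset.mem_inter.2 ⟨hx, Multiset.mem_toFinset.2 hmem⟩)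
  rw [h1]
  calc ∑ x ∈ G ∩ s.toFinset, s.count x ≤ ∑ x ∈ s.toFinset, s.count x :=
        Finset.sum_le_sum_of_subset (Finset.inter_subset_right)
    _ = Multiset.card s := Multiset.toFinset_sum_count_eq s

lemma sum_vA_le (τ : R ≃+* R)
    (horb : ∀ z : R, Irreducible z → ∀ n : ℕ, 1 ≤ n → ¬ Associated ((τ ^ n) z) z)
    {y : R} (hy : Irreducible y) (w : R) (K : ℕ) :
    ∑ n ∈ Finset.range K, vA ((τ ^ n) y) w ≤ Multiset.card (normalizedFactors w) := by
  have hinj : Set.InjOn (fun n => normalize ((τ ^ n) y)) (Finset.range K) := by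
    intro n _ m _ h
    have : Associated ((τ ^ n) y) ((τ ^ m) y) := by
      rw [← dvd_dvd_iff_associated, ← normalize_eq_normalize_iff]
      exact h
    exact orbit_inj τ horb hy this
  have : ∑ n ∈ Finset.range K, vA ((τ ^ n) y) w
      = ∑ x ∈ (Finset.range K).image (fun n => normalize ((τ ^ n) y)),
          (normalizedFactors w).count x := by
    rw [Finset.sum_image]
    · rfl
    · intro n hn m hm h
      exact hinj hn hm h
  rw [this]
  exact sum_count_le _ _

lemma exists_vanish (τ : R ≃+* R)
    (horb : ∀ z : R, Irreducible z → ∀ n : ℕ, 1 ≤ n → ¬ Associated ((τ ^ n) z) z)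
    {y : R} (hy : Irreducible y) (w : R) :
    ∃ N : ℕ, vA ((τ ^ N) y) w = 0 := by
  by_contra hcon
  push_neg at hcon
  set K := Multiset.card (normalizedFactors w) + 1 with hK
  have h1 : K ≤ ∑ n ∈ Finset.range K, vA ((τ ^ n) y) w := by
    calc K = ∑ _n ∈ Finset.range K, 1 := by simp
      _ ≤ _ := Finset.sum_le_sum (fun n _ => by
          have := hcon n
          omega)
  have h2 := sum_vA_le τ horb hy w K
  omega

lemma select (τ : R ≃+* R)
    (horb : ∀ z : R, Irreducible z → ∀ n : ℕ, 1 ≤ n → ¬ Associated ((τ ^ n) z) z)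
    {b w : R} (hb : b ≠ 0) (hw : w ≠ 0) (hdvd : w ∣ τ⁻¹ w * b)
    {y : R} (hy : Irreducible y) {c : ℕ} (hc1 : 1 ≤ c) (hc : c ≤ vA y w) :
    ∃ N a2 : ℕ, Gv τ b y N + a2 + 1 = c ∧ a2 < vA ((τ ^ N) y) b := by
  have hex : ∃ N : ℕ, c ≤ Gv τ b y (N + 1) := by
    obtain ⟨N0, hN0⟩ := exists_vanish τ horb hy w
    refine ⟨N0, ?_⟩
    have hiter := vA_iter hb hw hdvd y N0
    have hmono : Gv τ b y N0 ≤ Gv τ b y (N0 + 1) := by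
      unfold Gv; rw [Finset.sum_range_succ]; omega
    omega
  set N := Nat.find hex with hN
  have hfind : c ≤ Gv τ b y (N + 1) := Nat.find_spec hex
  have hless : Gv τ b y N < c := by
    rcases Nat.eq_zero_or_pos N with h0 | h0
    · rw [h0]
      have : Gv τ b y 0 = 0 := by simp [Gv]
      omega
    · have := Nat.find_min hex (m := N - 1) (by omega)
      have heq : N - 1 + 1 = N := by omega
      rw [heq] at this
      omega
  refine ⟨N, c - 1 - Gv τ b y N, by omega, ?_⟩
  have : Gv τ b y (N + 1) = Gv τ b y N + vA ((τ ^ N) y) b := by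
    unfold Gv; rw [Finset.sum_range_succ]
  omega

lemma normalize_eq_iff_assoc {x y : R} :
    normalize x = normalize y ↔ Associated x y := by
  rw [normalize_eq_normalize_iff, dvd_dvd_iff_associated]

lemma key_oriented (σ : R ≃+* R)
    (horbinv : ∀ z : R, Irreducible z → ∀ n : ℕ, 1 ≤ n → ¬ Associated (((σ⁻¹) ^ n) z) z)
    {p q : R} (hp : p ≠ 0) (hq : q ≠ 0)
    {y y' : R} (hy : Irreducible y) (hy' : Irreducible y')
    {c c' N a N' Nt bt Nt' : ℕ}
    (hNN' : N' ≤ N)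
    (hzp : normalize ((σ ^ N) y) = normalize ((σ ^ N') y'))
    (hzq : normalize (((σ⁻¹) ^ Nt) y) = normalize (((σ⁻¹) ^ Nt') y'))
    (e1 : Gv σ p y N + a + 1 = c) (e1' : Gv σ p y' N' + a + 1 = c')
    (e2 : Gv σ⁻¹ q y Nt + bt + 1 = c) (e2' : Gv σ⁻¹ q y' Nt' + bt + 1 = c') :
    c = c' ∧ ∀ w : R, w ≠ 0 → w ∣ σ⁻¹ w * p → w ∣ σ w * q → vA y w = vA y' w := by
  set δ := N - N' with hδ
  have hNδ : N = N' + δ := by omega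
  have hA : Associated ((σ ^ N) y) ((σ ^ N') y') := normalize_eq_iff_assoc.1 hzp
  have hyy' : Associated ((σ ^ δ) y) y' := by
    apply assoc_cancel (σ ^ N')
    have h2 : (σ ^ N') ((σ ^ δ) y) = (σ ^ N) y := by rw [← pow_apply_add, ← hNδ]
    rw [h2]
    exact hA
  -- p-side bookkeeping
  have hGp : Gv σ p y N = Gv σ p y δ + Gv σ p y' N' := by
    have h1 : Gv σ p y N = Gv σ p y δ + ∑ n ∈ Finset.range N', vA ((σ ^ (δ + n)) y) p := by
      rw [hNδ, add_comm N' δ, Gv_add]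
    rw [h1]
    congr 1
    apply Finset.sum_congr rfl
    intro n _
    apply vA_assoc
    have h3 : (σ ^ (δ + n)) y = (σ ^ n) ((σ ^ δ) y) := by
      rw [add_comm δ n, pow_apply_add]
    rw [h3]
    exact hyy'.map (σ ^ n)
  have hcp : c = c' + Gv σ p y δ := by omega
  -- q-side bookkeeping
  have hy'y : Associated (((σ⁻¹) ^ δ) y') y := by
    have := hyy'.symm.map ((σ⁻¹) ^ δ)
    rw [inv_pow_apply_pow] at this
    exact this
  have hNt' : Nt + δ = Nt' := by
    apply orbit_inj σ⁻¹ horbinv hy'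
    have hq1 : Associated (((σ⁻¹) ^ Nt) y) (((σ⁻¹) ^ Nt') y') := normalize_eq_iff_assoc.1 hzq
    have hq2 : ((σ⁻¹) ^ (Nt + δ)) y' = ((σ⁻¹) ^ Nt) (((σ⁻¹) ^ δ) y') := pow_apply_add σ⁻¹ Nt δ y'
    rw [hq2]
    exact (hy'y.map ((σ⁻¹) ^ Nt)).trans hq1
  have hGq : Gv σ⁻¹ q y' Nt' = Gv σ⁻¹ q y' δ + Gv σ⁻¹ q y Nt := by
    have h1 : Gv σ⁻¹ q y' Nt' = Gv σ⁻¹ q y' δ + ∑ n ∈ Finset.range Nt, vA (((σ⁻¹) ^ (δ + n)) y') q := by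
      rw [← hNt', add_comm Nt δ, Gv_add]
    rw [h1]
    congr 1
    apply Finset.sum_congr rfl
    intro n _
    apply vA_assoc
    have h3 : ((σ⁻¹) ^ (δ + n)) y' = ((σ⁻¹) ^ n) (((σ⁻¹) ^ δ) y') := by
      rw [add_comm δ n, pow_apply_add]
    rw [h3]
    exact hy'y.map ((σ⁻¹) ^ n)
  have hcq : c' = c + Gv σ⁻¹ q y' δ := by omega
  have hcc : c = c' := by omega
  have hp0 : Gv σ p y δ = 0 := by omega
  have hq0 : Gv σ⁻¹ q y' δ = 0 := by omega
  have hp0' : ∀ n, n < δ → vA ((σ ^ n) y) p = 0 := by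
    intro n hn
    have := (Finset.sum_eq_zero_iff.1 hp0) n (Finset.mem_range.2 hn)
    exact this
  have hq0' : ∀ n, n < δ → vA (((σ⁻¹) ^ n) y') q = 0 := by
    intro n hn
    exact (Finset.sum_eq_zero_iff.1 hq0) n (Finset.mem_range.2 hn)
  refine ⟨hcc, ?_⟩
  intro w hw hdp hdq
  have hdq' : w ∣ (σ⁻¹)⁻¹ w * q := by rw [inv_inv]; exact hdq
  have step : ∀ n, n < δ → vA ((σ ^ n) y) w = vA ((σ ^ (n + 1)) y) w := by
    intro n hn
    have up : vA ((σ ^ n) y) w ≤ vA ((σ ^ (n + 1)) y) w + vA ((σ ^ n) y) p := by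
      have h5 := vA_step hp hw hdp ((σ ^ n) y)
      rw [← pow_apply_succ] at h5
      exact h5
    have down : vA ((σ ^ (n + 1)) y) w ≤ vA ((σ ^ n) y) w + vA ((σ ^ (n + 1)) y) q := by
      have h5 := vA_step hq hw hdq' ((σ ^ (n + 1)) y)
      have h6 : σ⁻¹ ((σ ^ (n + 1)) y) = (σ ^ n) y := by
        rw [pow_apply_succ]
        exact σ.symm_apply_apply _
      rw [h6] at h5
      exact h5
    have hq0n : vA ((σ ^ (n + 1)) y) q = 0 := by
      have hj : δ - n - 1 < δ := by omega
      have hassoc : Associated (((σ⁻¹) ^ (δ - n - 1)) y') ((σ ^ (n + 1)) y) := by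
        have h7 := hyy'.symm.map ((σ⁻¹) ^ (δ - n - 1))
        have h8 : ((σ⁻¹) ^ (δ - n - 1)) ((σ ^ δ) y) = (σ ^ (n + 1)) y := by
          have h9 : (σ ^ δ) y = (σ ^ (δ - n - 1)) ((σ ^ (n + 1)) y) := by
            rw [← pow_apply_add]
            have h10 : δ - n - 1 + (n + 1) = δ := by omega
            rw [h10]
          rw [h9, inv_pow_apply_pow]
        rw [h8] at h7
        exact h7
      rw [← vA_assoc hassoc q]
      exact hq0' _ hj
    have hp0n := hp0' n hn
    omega
  have claim : ∀ n, n ≤ δ → vA ((σ ^ n) y) w = vA y w := by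
    intro n
    induction n with
    | zero => intro _; rw [pow_apply_zero]
    | succ k ih =>
      intro hk
      rw [← step k (by omega)]
      exact ih (by omega)
  have := claim δ le_rfl
  rw [← this]
  exact vA_assoc hyy' w
lemma horb_inv (σ : R ≃+* R)
    (horb : ∀ z : R, Irreducible z → ∀ n : ℕ, 1 ≤ n → ¬ Associated ((σ ^ n) z) z) :
    ∀ z : R, Irreducible z → ∀ n : ℕ, 1 ≤ n → ¬ Associated (((σ⁻¹) ^ n) z) z := by
  intro z hz n hn hcon
  apply horb z hz n hn
  have := hcon.map (σ ^ n)
  have h2 : (σ ^ n) (((σ⁻¹) ^ n) z) = z := by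
    rw [inv_pow]
    show ((σ ^ n) * (σ ^ n)⁻¹) z = z
    rw [mul_inv_cancel]; rfl
  rw [h2] at this
  exact this.symm

lemma key_sym (σ : R ≃+* R)
    (horbinv : ∀ z : R, Irreducible z → ∀ n : ℕ, 1 ≤ n → ¬ Associated (((σ⁻¹) ^ n) z) z)
    {p q : R} (hp : p ≠ 0) (hq : q ≠ 0)
    {y y' : R} (hy : Irreducible y) (hy' : Irreducible y')
    {c c' N a N' Nt bt Nt' : ℕ}
    (hzp : normalize ((σ ^ N) y) = normalize ((σ ^ N') y'))
    (hzq : normalize (((σ⁻¹) ^ Nt) y) = normalize (((σ⁻¹) ^ Nt') y'))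
    (e1 : Gv σ p y N + a + 1 = c) (e1' : Gv σ p y' N' + a + 1 = c')
    (e2 : Gv σ⁻¹ q y Nt + bt + 1 = c) (e2' : Gv σ⁻¹ q y' Nt' + bt + 1 = c') :
    c = c' ∧ ∀ w : R, w ≠ 0 → w ∣ σ⁻¹ w * p → w ∣ σ w * q → vA y w = vA y' w := by
  rcases le_total N' N with h | h
  · exact key_oriented σ horbinv hp hq hy hy' h hzp hzq e1 e1' e2 e2'
  · obtain ⟨h1, h2⟩ := key_oriented σ horbinv hp hq hy' hy h hzp.symm hzq.symm e1' e1 e2' e2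
    exact ⟨h1.symm, fun w hw hA hB => (h2 w hw hA hB).symm⟩

lemma chain_bound (σ : R ≃+* R)
    (horb : ∀ z : R, Irreducible z → ∀ n : ℕ, 1 ≤ n → ¬ Associated ((σ ^ n) z) z)
    {p q : R} (hp : p ≠ 0) (hq : q ≠ 0)
    (M : ℕ) (w : ℕ → R)
    (hval : ∀ k, k < M → w k ≠ 0 ∧ w k ∣ σ⁻¹ (w k) * p ∧ w k ∣ σ (w k) * q)
    (hdvd : ∀ k, k + 1 < M → w k ∣ w (k + 1))
    (hstrict : ∀ k, k + 1 < M → ¬ w (k + 1) ∣ w k) :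
    M - 1 ≤ Multiset.card (normalizedFactors p) * Multiset.card (normalizedFactors q) := by
  have horbinv := horb_inv σ horb
  -- monotonicity of divisibility along the chain
  have hmono0 : ∀ k j, k + j < M → w k ∣ w (k + j) := by
    intro k j
    induction j with
    | zero => intro _; simp
    | succ i ih =>
      intro h
      have h2 : k + (i + 1) = (k + i) + 1 := by omega
      rw [h2]
      exact (ih (by omega)).trans (hdvd (k + i) (by omega))
  have hmono : ∀ k k', k ≤ k' → k' < M → w k ∣ w k' := by
    intro k k' hk hk'
    have := hmono0 k (k' - k) (by omega)
    rw [show k + (k' - k) = k' by omega] at this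
    exact this
  -- choose the data for each step
  have H : ∀ k, ∃ y : R, ∃ c N a2 Nt b2 : ℕ, k + 1 < M →
      Irreducible y ∧ c = vA y (w (k + 1)) ∧ vA y (w k) < c ∧
      (Gv σ p y N + a2 + 1 = c ∧ a2 < vA ((σ ^ N) y) p) ∧
      (Gv σ⁻¹ q y Nt + b2 + 1 = c ∧ b2 < vA (((σ⁻¹) ^ Nt) y) q) := by
    intro k
    by_cases hk : k + 1 < M
    · obtain ⟨hw0, hdp, hdq⟩ := hval k (by omega)
      obtain ⟨hw1, hdp1, hdq1⟩ := hval (k + 1) hk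
      obtain ⟨cf, hcf⟩ := hdvd k hk
      have hcf0 : cf ≠ 0 := by
        intro h
        apply hw1
        rw [hcf, h, mul_zero]
      have hcfu : ¬ IsUnit cf := by
        intro hu
        apply hstrict k hk
        rw [hcf]
        obtain ⟨u, rfl⟩ := hu
        exact (Units.mul_right_dvd).2 dvd_rfl
      obtain ⟨y, hy, hydvd⟩ := WfDvdMonoid.exists_irreducible_factor hcfu hcf0
      have hlt : vA y (w k) < vA y (w (k + 1)) := by
        rw [hcf, vA_mul y hw0 hcf0]
        have := one_le_vA hy hcf0 hydvd
        omega
      set c := vA y (w (k + 1)) with hc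
      have hc1 : 1 ≤ c := by omega
      obtain ⟨N, a2, hNa⟩ := select σ horb hp hw1 hdp1 hy hc1 le_rfl
      have hdq1' : w (k + 1) ∣ (σ⁻¹)⁻¹ (w (k + 1)) * q := by rw [inv_inv]; exact hdq1
      obtain ⟨Nt, b2, hNb⟩ := select σ⁻¹ horbinv hq hw1 hdq1' hy hc1 le_rfl
      exact ⟨y, c, N, a2, Nt, b2, fun _ => ⟨hy, rfl, hlt, hNa, hNb⟩⟩
    · exact ⟨0, 0, 0, 0, 0, 0, fun h => absurd h hk⟩
  choose y c N a2 Nt b2 hspec using H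
  -- the target finsets
  set Tp : Finset ((_ : R) × ℕ) :=
    (normalizedFactors p).toFinset.sigma
      (fun x => Finset.range ((normalizedFactors p).count x)) with hTp
  set Tq : Finset ((_ : R) × ℕ) :=
    (normalizedFactors q).toFinset.sigma
      (fun x => Finset.range ((normalizedFactors q).count x)) with hTq
  set f : ℕ → ((_ : R) × ℕ) × ((_ : R) × ℕ) :=
    fun k => (⟨normalize ((σ ^ N k) (y k)), a2 k⟩, ⟨normalize (((σ⁻¹) ^ Nt k) (y k)), b2 k⟩)
    with hf
  have hmapsto : ∀ k ∈ Finset.range (M - 1), f k ∈ Tp ×ˢ Tq := by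
    intro k hk
    have hkM : k + 1 < M := by
      have := Finset.mem_range.1 hk
      omega
    obtain ⟨hy, hceq, hlt, ⟨hNa1, hNa2⟩, ⟨hNb1, hNb2⟩⟩ := hspec k hkM
    simp only [hf]
    have hmem : ∀ (z : R) (i : ℕ) (b : R), i < (normalizedFactors b).count (normalize z) →
        (⟨normalize z, i⟩ : (_ : R) × ℕ) ∈ ((normalizedFactors b).toFinset.sigma
          (fun x => Finset.range ((normalizedFactors b).count x))) := by
      intro z i b h
      rw [Finset.mem_sigma]
      exact ⟨Multiset.mem_toFinset.2 (Multiset.count_pos.1 (Nat.lt_of_le_of_lt (Nat.zero_le i) h)),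
        Finset.mem_range.2 h⟩
    refine Finset.mem_product.2 ⟨?_, ?_⟩
    · rw [hTp]
      apply hmem
      have hh : vA ((σ ^ N k) (y k)) p
          = (normalizedFactors p).count (normalize ((σ ^ N k) (y k))) := rfl
      omega
    · rw [hTq]
      apply hmem
      have hh : vA (((σ⁻¹) ^ Nt k) (y k)) q
          = (normalizedFactors q).count (normalize (((σ⁻¹) ^ Nt k) (y k))) := rfl
      omega
  have hkey : ∀ k k', k + 1 < M → k' + 1 < M → k < k' → f k = f k' → False := by
    intro k k' hkM hk'M hkk' heq
    obtain ⟨hyk, hceq, hlt, ⟨hNa1, hNa2⟩, ⟨hNb1, hNb2⟩⟩ := hspec k hkM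
    obtain ⟨hyk', hceq', hlt', ⟨hNa1', hNa2'⟩, ⟨hNb1', hNb2'⟩⟩ := hspec k' hk'M
    simp only [hf] at heq
    have heq1 := congrArg Prod.fst heq
    have heq2 := congrArg Prod.snd heq
    simp only at heq1 heq2
    rw [Sigma.mk.inj_iff] at heq1 heq2
    obtain ⟨hz1, ha1'⟩ := heq1
    obtain ⟨hz2, hb1'⟩ := heq2
    have ha1 : a2 k = a2 k' := eq_of_heq ha1'
    have hb1 : b2 k = b2 k' := eq_of_heq hb1'
    rw [← ha1] at hNa1'
    rw [← hb1] at hNb1'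
    obtain ⟨hcc, hvv⟩ := key_sym σ horbinv hp hq hyk hyk' hz1 hz2 hNa1 hNa1' hNb1 hNb1'
    obtain ⟨hw0', hdp', hdq'⟩ := hval k' (by omega)
    have h1 : c k ≤ vA (y k) (w k') := by
      rw [hceq]
      exact vA_le_of_dvd (y k) (hmono (k + 1) k' (by omega) (by omega)) hw0'
    have h2 : vA (y k) (w k') = vA (y k') (w k') := hvv (w k') hw0' hdp' hdq'
    omega
  have hinj : Set.InjOn f (Finset.range (M - 1)) := by
    intro k hk k' hk' heq
    simp only [Finset.coe_range, Set.mem_Iio] at hk hk'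
    by_contra hne
    rcases lt_or_gt_of_ne hne with h | h
    · exact hkey k k' (by omega) (by omega) h heq
    · exact hkey k' k (by omega) (by omega) h heq.symm
  have hcard := Finset.card_le_card_of_injOn f hmapsto hinj
  rw [Finset.card_range, Finset.card_product] at hcard
  have hTpcard : Tp.card = Multiset.card (normalizedFactors p) := by
    rw [hTp, Finset.card_sigma]
    simp only [Finset.card_range]
    exact Multiset.toFinset_sum_count_eq _
  have hTqcard : Tq.card = Multiset.card (normalizedFactors q) := by
    rw [hTq, Finset.card_sigma]
    simp only [Finset.card_range]
    exact Multiset.toFinset_sum_count_eq _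
  rw [hTpcard, hTqcard] at hcard
  exact hcard

end Aux

/-- An ideal `I` of `R` is `(p,q)`-invariant if `σ⁻¹(i)·p ∈ I` and `σ(i)·q ∈ I`
for every `i ∈ I`. -/
def PQInvariant {R : Type*} [CommRing R] (σ : R ≃+* R) (p q : R) (I : Ideal R) : Prop :=
  ∀ i ∈ I, σ⁻¹ i * p ∈ I ∧ σ i * q ∈ I

/-- Uniform bound on the lengths of all rank-one `R`-free modules over
the GWA `R(σ,a)`: if all `σ`-orbits of irreducibles are infinite, `a ≠ 0` has `d`
irreducible factors (with multiplicity), `p ∣ a` and `q = σ(a/p)`, then every strictly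
increasing chain `I₀ ⊊ ⋯ ⊊ I_m` of `(p,q)`-invariant ideals satisfies
`4(m − 1) ≤ d²`. -/
theorem stmt_11 {R : Type*} [CommRing R] [IsDomain R] [IsPrincipalIdealRing R]
    (σ : R ≃+* R)
    (horb : ∀ z : R, Irreducible z → ∀ n : ℕ, 1 ≤ n → ¬ Associated ((σ ^ n) z) z)
    (a : R) (ha : a ≠ 0)
    (d : ℕ) (hd : d = Multiset.card (UniqueFactorizationMonoid.factors a))
    (p r : R) (hpr : a = p * r)
    (m : ℕ) (I : Fin (m + 1) → Ideal R)
    (hchain : StrictMono I) (hinv : ∀ j, PQInvariant σ p (σ r) (I j)) :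
    4 * (m - 1) ≤ d ^ 2 := by
  letI : NormalizationMonoid R := (UniqueFactorizationMonoid.normalizationMonoid (α := R)).toNormalizationMonoid
  have hp : p ≠ 0 := fun h => ha (by rw [hpr, h, zero_mul])
  have hr : r ≠ 0 := fun h => ha (by rw [hpr, h, mul_zero])
  have hq : σ r ≠ 0 := fun h => hr (by
    have := congrArg σ.symm h
    rw [σ.symm_apply_apply] at this
    rw [this]
    exact σ.symm.map_zero)
  -- choose generators
  have hgen : ∀ j : Fin (m + 1), ∃ g : R, I j = Ideal.span {g} :=
    fun j => Submodule.IsPrincipal.principal (I j)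
  choose G hG using hgen
  -- the chain of elements
  have hidx : ∀ k : ℕ, m - k < m + 1 := fun k => by omega
  set w : ℕ → R := fun k => G ⟨m - k, hidx k⟩ with hw
  have hmem : ∀ j, G j ∈ I j := fun j => by
    rw [hG j]
    exact Ideal.mem_span_singleton_self _
  have hne : ∀ k, k < m → w k ≠ 0 := by
    intro k hk h0
    have hlt : (0 : Fin (m + 1)) < ⟨m - k, hidx k⟩ := by
      rw [Fin.lt_def]
      simp only [Fin.val_zero]
      omega
    have hc := hchain hlt
    rw [hG ⟨m - k, hidx k⟩] at hc
    have hGw : G ⟨m - k, hidx k⟩ = w k := rfl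
    rw [hGw, h0, Ideal.span_singleton_eq_bot.2 rfl] at hc
    exact absurd (lt_of_le_of_lt bot_le hc) (lt_irrefl _)
  have hval : ∀ k, k < m → w k ≠ 0 ∧ w k ∣ σ⁻¹ (w k) * p ∧ w k ∣ σ (w k) * (σ r) := by
    intro k hk
    refine ⟨hne k hk, ?_, ?_⟩
    · have h1 := (hinv ⟨m - k, hidx k⟩ (w k) (by rw [hw]; exact hmem _)).1
      rw [hG] at h1
      exact Ideal.mem_span_singleton.1 h1
    · have h1 := (hinv ⟨m - k, hidx k⟩ (w k) (by rw [hw]; exact hmem _)).2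
      rw [hG] at h1
      exact Ideal.mem_span_singleton.1 h1
  have hdvd : ∀ k, k + 1 < m → w k ∣ w (k + 1) := by
    intro k hk
    have hle : (⟨m - (k + 1), hidx (k + 1)⟩ : Fin (m + 1)) ≤ ⟨m - k, hidx k⟩ := by
      rw [Fin.le_def]
      simp only
      omega
    have := hchain.monotone hle
    rw [hG, hG] at this
    apply Ideal.mem_span_singleton.1
    apply this
    exact Ideal.mem_span_singleton_self _
  have hstrict : ∀ k, k + 1 < m → ¬ w (k + 1) ∣ w k := by
    intro k hk hdd
    have hlt : (⟨m - (k + 1), hidx (k + 1)⟩ : Fin (m + 1)) < ⟨m - k, hidx k⟩ := by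
      rw [Fin.lt_def]
      simp only
      omega
    have hc := hchain hlt
    have hle : I ⟨m - k, hidx k⟩ ≤ I ⟨m - (k + 1), hidx (k + 1)⟩ := by
      rw [hG, hG]
      exact Ideal.span_singleton_le_span_singleton.2 hdd
    exact absurd (lt_of_lt_of_le hc hle) (lt_irrefl _)
  have hbound := chain_bound σ horb hp hq m w hval hdvd hstrict
  -- cardinality bookkeeping
  set s := Multiset.card (normalizedFactors p) with hs
  set t := Multiset.card (normalizedFactors (σ r)) with ht
  have htr : t = Multiset.card (normalizedFactors r) := by
    rw [ht, Multiset.card_eq_card_of_rel (rel_nf_map σ hr), Multiset.card_map]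
  have hdst : d = s + t := by
    have h1 : Multiset.card (normalizedFactors a) = d := by
      rw [hd]
      show Multiset.card (Multiset.map _ _) = _
      rw [Multiset.card_map]
    rw [← h1, hpr, normalizedFactors_mul hp hr, Multiset.card_add, htr]
  have hfin : 4 * (s * t) ≤ d ^ 2 := by
    rw [hdst]
    have : (4 : ℤ) * (s * t) ≤ ((s : ℤ) + t) ^ 2 := by nlinarith [sq_nonneg ((s : ℤ) - t)]
    exact_mod_cast this
  omega
end

section
/- Let R be a commutative integral domain with a ring automorphism σ and let p, q ∈ R with p·σ^{−1}(q) ≠ 0. Assume there is no infinite strictly descending chain I₀ ⊋ I₁ ⊋ I₂ ⊋ ⋯ of (p,q)-invariant ideals of R. Then every element r ∈ R for which there exist an integer n ≠ 0 and a unit u ∈ R with σ^n(r) = u·r is either zero or a unit of R; in particular, the fixed subring R^σ = {r ∈ R : σ(r) = r} is a field. -/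
/-- If `σ(s) = u·s` with `u` a unit, then `(s^k)` is a `(p,q)`-invariant ideal. -/
lemma span_pow_pqInvariant {R : Type*} [CommRing R] (σ : R ≃+* R) (p q : R)
    {s u : R} (hu : IsUnit u) (hs : σ s = u * s) (k : ℕ) :
    PQInvariant σ p q (Ideal.span {s ^ k}) := by
  have hu' : IsUnit ((σ⁻¹ : R ≃+* R) u) := hu.map (σ⁻¹ : R ≃+* R)
  obtain ⟨v, hv⟩ := hu'.exists_left_inv
  have h1 : s ∣ (σ⁻¹ : R ≃+* R) s := by
    refine ⟨v, ?_⟩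
    have hσi : s = (σ⁻¹ : R ≃+* R) u * (σ⁻¹ : R ≃+* R) s := by
      have h := congrArg (σ⁻¹ : R ≃+* R) hs
      rw [map_mul] at h
      have h2 : (σ⁻¹ : R ≃+* R) (σ s) = s := σ.symm_apply_apply s
      rw [h2] at h
      exact h
    calc (σ⁻¹ : R ≃+* R) s = 1 * (σ⁻¹ : R ≃+* R) s := (one_mul _).symm
      _ = v * ((σ⁻¹ : R ≃+* R) u * (σ⁻¹ : R ≃+* R) s) := by rw [← hv]; ring
      _ = v * s := by rw [← hσi]
      _ = s * v := mul_comm _ _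
  have h2 : s ∣ σ s := ⟨u, by rw [hs, mul_comm]⟩
  intro i hi
  rw [Ideal.mem_span_singleton] at hi
  obtain ⟨x, rfl⟩ := hi
  constructor
  · rw [Ideal.mem_span_singleton, map_mul, map_pow]
    exact Dvd.dvd.mul_right (Dvd.dvd.mul_right (pow_dvd_pow_of_dvd h1 k) _) _
  · rw [Ideal.mem_span_singleton, map_mul, map_pow]
    exact Dvd.dvd.mul_right (Dvd.dvd.mul_right (pow_dvd_pow_of_dvd h2 k) _) _

/-- The key chain argument: a nonzero nonunit `σ`-semi-invariant element gives an
infinite strictly descending chain of `(p,q)`-invariant ideals. -/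
lemma chain_of_semiinvariant {R : Type*} [CommRing R] [IsDomain R] (σ : R ≃+* R) (p q : R)
    (hdcc : ¬ ∃ I : ℕ → Ideal R, (∀ n, PQInvariant σ p q (I n)) ∧ ∀ n, I (n + 1) < I n)
    {s u : R} (hu : IsUnit u) (hs : σ s = u * s) (hs0 : s ≠ 0) (hsnu : ¬ IsUnit s) :
    False := by
  refine hdcc ⟨fun k => Ideal.span {s ^ k}, fun k => span_pow_pqInvariant σ p q hu hs k, ?_⟩
  intro k
  rw [Ideal.span_singleton_lt_span_singleton]
  exact ⟨pow_ne_zero k hs0, s, hsnu, pow_succ s k⟩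

/-- If the rank-one `R`-free module `V_p` (i.e. the lattice of
`(p,q)`-invariant ideals) satisfies the descending chain condition, then every `r ∈ R`
with `σ^n(r) = u·r` for some `n ≠ 0` and unit `u` is zero or a unit; in particular the
fixed subring `R^σ` is a field. -/
theorem stmt_12 {R : Type*} [CommRing R] [IsDomain R] (σ : R ≃+* R) (p q : R)
    (hpq : p * σ⁻¹ q ≠ 0)
    (hdcc : ¬ ∃ I : ℕ → Ideal R, (∀ n, PQInvariant σ p q (I n)) ∧ ∀ n, I (n + 1) < I n) :
    (∀ r : R, (∃ n : ℤ, n ≠ 0 ∧ ∃ u : R, IsUnit u ∧ (σ ^ n) r = u * r) →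
        r = 0 ∨ IsUnit r) ∧
      IsField (RingHom.eqLocus (σ : R →+* R) (RingHom.id R)) := by
  have main : ∀ r : R, (∃ n : ℤ, n ≠ 0 ∧ ∃ u : R, IsUnit u ∧ (σ ^ n) r = u * r) →
      r = 0 ∨ IsUnit r := by
    rintro r ⟨n, hn, u, hu, hσn⟩
    by_contra hcon
    push_neg at hcon
    obtain ⟨hr0, hrnu⟩ := hcon
    -- reduce to a positive natural exponent
    obtain ⟨m, hm, v, hv, hσm⟩ :
        ∃ m : ℕ, 0 < m ∧ ∃ v : R, IsUnit v ∧ (σ ^ m) r = v * r := by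
      rcases hn.lt_or_gt with hneg | hpos
      · refine ⟨(-n).toNat, by omega, ?_⟩
        have hcast : ((-n).toNat : ℤ) = -n := Int.toNat_of_nonneg (by omega)
        have hpow : (σ ^ (-n).toNat : R ≃+* R) = σ ^ (-n) := by
          rw [← zpow_natCast σ (-n).toNat, hcast]
        have hr : r = (σ ^ (-n).toNat) u * (σ ^ (-n).toNat) r := by
          rw [← map_mul, ← hσn, hpow]
          have : ((σ ^ (-n)) * (σ ^ n) : R ≃+* R) r = r := by
            rw [← zpow_add, neg_add_cancel, zpow_zero]; rfl
          exact this.symm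
        have huu : IsUnit ((σ ^ (-n).toNat : R ≃+* R) u) :=
          hu.map (σ ^ (-n).toNat : R ≃+* R)
        obtain ⟨w, hw⟩ := huu.exists_left_inv
        refine ⟨w, IsUnit.of_mul_eq_one _ hw, ?_⟩
        calc (σ ^ (-n).toNat) r = 1 * (σ ^ (-n).toNat) r := (one_mul _).symm
          _ = w * ((σ ^ (-n).toNat) u * (σ ^ (-n).toNat) r) := by rw [← hw]; ring
          _ = w * r := by rw [← hr]
      · refine ⟨n.toNat, by omega, u, hu, ?_⟩
        have hcast : (n.toNat : ℤ) = n := Int.toNat_of_nonneg (by omega)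
        have hpow : (σ ^ n.toNat : R ≃+* R) = σ ^ n := by
          rw [← zpow_natCast σ n.toNat, hcast]
        rw [hpow]; exact hσn
    -- build the semi-invariant s = ∏_{j<m} σ^j(r)
    set f : ℕ → R := fun j => (σ ^ j : R ≃+* R) r with hf
    set s : R := ∏ j ∈ Finset.range m, f j with hsdef
    have hfz : ∀ j, f j ≠ 0 := by
      intro j h0
      apply hr0
      simp only [hf] at h0
      have := congrArg ((σ ^ j : R ≃+* R)).symm h0
      rwa [RingEquiv.symm_apply_apply, map_zero] at this
    have hs0 : s ≠ 0 := Finset.prod_ne_zero_iff.mpr fun j _ => hfz j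
    have hstep : ∀ j, σ (f j) = f (j + 1) := by
      intro j
      show σ ((σ ^ j : R ≃+* R) r) = (σ ^ (j + 1) : R ≃+* R) r
      rw [pow_succ']
      rfl
    have hσs : σ s = v * s := by
      have h1 : σ s = ∏ j ∈ Finset.range m, f (j + 1) := by
        rw [hsdef, map_prod]
        exact Finset.prod_congr rfl fun j _ => hstep j
      have h2 : σ s * r = s * (v * r) := by
        have h3 : (∏ j ∈ Finset.range m, f (j + 1)) * f 0 =
            ∏ j ∈ Finset.range (m + 1), f j := (Finset.prod_range_succ' f m).symm
        have h4 : ∏ j ∈ Finset.range (m + 1), f j = s * f m := Finset.prod_range_succ f m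
        have hf0 : f 0 = r := by rw [hf]; simp only [pow_zero]; rfl
        have hfm : f m = v * r := hσm
        calc σ s * r = (∏ j ∈ Finset.range m, f (j + 1)) * f 0 := by rw [h1, hf0]
          _ = s * f m := by rw [h3, h4]
          _ = s * (v * r) := by rw [hfm]
      have := h2
      rw [show s * (v * r) = v * s * r by ring] at this
      exact mul_right_cancel₀ hr0 this
    have hsnu : ¬ IsUnit s := by
      intro hus
      apply hrnu
      have hmem : (0 : ℕ) ∈ Finset.range m := Finset.mem_range.mpr hm
      have hdvd : f 0 ∣ s := Finset.dvd_prod_of_mem f hmem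
      have hf0 : f 0 = r := by rw [hf]; simp only [pow_zero]; rfl
      exact isUnit_of_dvd_unit (hf0 ▸ hdvd) hus
    exact chain_of_semiinvariant σ p q hdcc hv hσs hs0 hsnu
  refine ⟨main, ?_, ?_, ?_⟩
  · exact ⟨0, 1, fun h => one_ne_zero (congrArg Subtype.val h).symm⟩
  · exact mul_comm
  · rintro ⟨a, ha⟩ h0
    have ha' : σ a = a := ha
    have ha0 : a ≠ 0 := fun h => h0 (Subtype.ext h)
    have : a = 0 ∨ IsUnit a := by
      refine main a ⟨1, one_ne_zero, 1, isUnit_one, ?_⟩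
      rw [zpow_one, one_mul]
      exact ha'
    rcases this with h | h
    · exact absurd h ha0
    · obtain ⟨w, hw⟩ := h
      have hab : a * ↑w⁻¹ = 1 := by rw [← hw]; exact w.mul_inv
      have hbfix : σ (↑w⁻¹ : R) = ↑w⁻¹ := by
        have h1 : σ a * σ (↑w⁻¹ : R) = 1 := by rw [← map_mul, hab, map_one]
        rw [ha'] at h1
        have h2 : a * σ (↑w⁻¹ : R) = a * ↑w⁻¹ := by rw [h1, hab]
        exact mul_left_cancel₀ ha0 h2
      refine ⟨⟨↑w⁻¹, hbfix⟩, ?_⟩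
      exact Subtype.ext hab
end

section
/- For fixed integers n, j, k, there exist finite multisets S and T of integers satisfying the multiset equation {j} ∪ (S − n) ∪ T = {k} ∪ S ∪ (T − n), where S − n denotes the multiset {s − n : s ∈ S} and unions are multiset unions counted with multiplicity, if and only if n divides j − k. -/
lemma aux_chain (n : ℤ) : ∀ (m : ℕ) (k : ℤ), ∃ S : Multiset ℤ,
    ({k + n * m} : Multiset ℤ) + S.map (fun s => s - n) = ({k} : Multiset ℤ) + S := by
  intro m
  induction m with
  | zero => intro k; exact ⟨0, by simp⟩
  | succ m ih =>
      intro k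
      obtain ⟨S, hS⟩ := ih k
      refine ⟨(k + n * (m + 1)) ::ₘ S, ?_⟩
      have : (((k + n * (m + 1)) ::ₘ S).map (fun s => s - n))
          = (k + n * m) ::ₘ S.map (fun s => s - n) := by
        rw [Multiset.map_cons]; ring_nf
      rw [this]
      push_cast
      rw [show ({k + n * (↑m + 1)} : Multiset ℤ) + ((k + n * ↑m) ::ₘ S.map (fun s => s - n))
          = (k + n * (↑m + 1)) ::ₘ (({k + n * ↑m} : Multiset ℤ) + S.map (fun s => s - n)) by
        simp [Multiset.singleton_add]
        rw [Multiset.cons_swap]]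
      rw [hS]
      simp [Multiset.singleton_add, Multiset.cons_swap]

/-- For fixed integers `n, j, k`, the multiset equation
`{j} ∪ (S − n) ∪ T = {k} ∪ S ∪ (T − n)` has a solution in finite multisets `S, T` of
integers if and only if `n ∣ j − k`. -/
theorem stmt_13 (n j k : ℤ) :
    (∃ S T : Multiset ℤ,
        ({j} : Multiset ℤ) + S.map (fun s => s - n) + T =
          ({k} : Multiset ℤ) + S + T.map (fun t => t - n)) ↔ n ∣ j - k := by
  constructor
  · rintro ⟨S, T, h⟩
    have hsum := congrArg Multiset.sum h
    simp [Multiset.sum_map_sub] at hsum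
    have hS : (S.map (fun s => s - n)).sum = S.sum - S.card * n := by
      induction S using Multiset.induction with
      | empty => simp
      | cons a s ih => simp [ih]; ring
    have hT : (T.map (fun t => t - n)).sum = T.sum - T.card * n := by
      induction T using Multiset.induction with
      | empty => simp
      | cons a s ih => simp [ih]; ring
    exact ⟨(S.card : ℤ) - T.card, by linarith [hsum]⟩
  · rintro ⟨d, hd⟩
    rcases le_or_gt 0 d with h | h
    · obtain ⟨m, rfl⟩ := Int.eq_ofNat_of_zero_le h
      obtain ⟨S, hS⟩ := aux_chain n m k
      refine ⟨S, 0, ?_⟩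
      have hj : j = k + n * m := by linarith
      simp [hj, hS]
    · have h' : k = j + n * (-d).toNat := by
        rw [Int.toNat_of_nonneg (by linarith)]; linarith
      obtain ⟨T, hT⟩ := aux_chain n (-d).toNat j
      refine ⟨0, T, ?_⟩
      rw [h']
      simp at hT ⊢
      exact hT.symm
end

section
/- Let R be a commutative noetherian integral domain with a ring automorphism σ, and let p, q ∈ R be nonzero with at least one of p or q a unit of R. Then an ideal I of R is (p,q)-invariant if and only if σ(I) = I. -/
lemma map_mul_ideal {R : Type*} [CommRing R] (a b : R ≃+* R) (I : Ideal R) :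
    Ideal.map ((a * b : R ≃+* R) : R →+* R) I
      = Ideal.map (a : R →+* R) (Ideal.map (b : R →+* R) I) := by
  rw [Ideal.map_map]
  rfl

lemma map_equiv_inj {R : Type*} [CommRing R] (e : R ≃+* R) :
    Function.Injective (Ideal.map (e : R →+* R) : Ideal R → Ideal R) := by
  intro J K h
  have : ∀ L : Ideal R, Ideal.map (e.symm : R →+* R) (Ideal.map (e : R →+* R) L) = L := by
    intro L
    rw [Ideal.map_map]
    have : (e.symm : R →+* R).comp (e : R →+* R) = RingHom.id R := by
      ext x; simp
    rw [this, Ideal.map_id]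
  rw [← this J, h, this]

lemma aux_stab {R : Type*} [CommRing R] [IsNoetherianRing R] (e : R ≃+* R) (I : Ideal R)
    (h : I ≤ Ideal.map (e : R →+* R) I) : Ideal.map (e : R →+* R) I = I := by
  set f : ℕ → Ideal R := fun n => Ideal.map ((e ^ n : R ≃+* R) : R →+* R) I with hf
  have hmono : Monotone f := by
    apply monotone_nat_of_le_succ
    intro n
    have : f (n + 1) = Ideal.map ((e ^ n : R ≃+* R) : R →+* R) (Ideal.map (e : R →+* R) I) := by
      rw [hf]; simp only
      rw [pow_succ, map_mul_ideal]
    rw [this]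
    exact Ideal.map_mono h
  obtain ⟨n, hn⟩ := monotone_stabilizes_iff_noetherian.mpr (inferInstance : IsNoetherian R R) ⟨f, hmono⟩
  have h1 : f n = f (n + 1) := hn (n + 1) (Nat.le_succ n)
  have h2 : f (n + 1) = Ideal.map ((e ^ n : R ≃+* R) : R →+* R) (Ideal.map (e : R →+* R) I) := by
    rw [hf]; simp only
    rw [pow_succ, map_mul_ideal]
  rw [h2] at h1
  exact (map_equiv_inj (e ^ n) h1).symm

/-- Over a noetherian domain, if `p` or `q` is a unit, then the
`(p,q)`-invariant ideals (= submodules of the universal Whittaker module `V_p`) are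
exactly the `σ`-stable ideals of `R`. -/
theorem stmt_14 {R : Type*} [CommRing R] [IsDomain R] [IsNoetherianRing R]
    (σ : R ≃+* R) (p q : R) (hp : p ≠ 0) (hq : q ≠ 0) (hu : IsUnit p ∨ IsUnit q)
    (I : Ideal R) :
    PQInvariant σ p q I ↔ Ideal.map (σ : R →+* R) I = I := by
  have hsymm : (σ⁻¹ : R ≃+* R) = σ.symm := rfl
  constructor
  · intro h
    rcases hu with hup | huq
    · -- p is a unit: σ⁻¹(I) ⊆ I, i.e. I ⊆ σ(I)
      obtain ⟨u, hu'⟩ := hup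
      have hle : I ≤ Ideal.map (σ : R →+* R) I := by
        intro i hi
        have h1 : σ⁻¹ i * p ∈ I := (h i hi).1
        have h2 : σ⁻¹ i ∈ I := by
          have : σ⁻¹ i = (σ⁻¹ i * p) * ↑u⁻¹ := by
            rw [mul_assoc, ← hu', Units.mul_inv, mul_one]
          rw [this]
          exact Ideal.mul_mem_right _ _ h1
        have : σ (σ⁻¹ i) ∈ Ideal.map (σ : R →+* R) I := Ideal.mem_map_of_mem _ h2
        simpa [hsymm] using this
      exact aux_stab σ I hle
    · -- q is a unit: σ(I) ⊆ I, i.e. I ⊆ σ⁻¹(I)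
      obtain ⟨u, hu'⟩ := huq
      have hle : I ≤ Ideal.map (σ.symm : R →+* R) I := by
        intro i hi
        have h1 : σ i * q ∈ I := (h i hi).2
        have h2 : σ i ∈ I := by
          have : σ i = (σ i * q) * ↑u⁻¹ := by
            rw [mul_assoc, ← hu', Units.mul_inv, mul_one]
          rw [this]
          exact Ideal.mul_mem_right _ _ h1
        have : σ.symm (σ i) ∈ Ideal.map (σ.symm : R →+* R) I := Ideal.mem_map_of_mem _ h2
        simpa using this
      have := aux_stab σ.symm I hle
      -- map σ.symm I = I  ⟹  map σ I = I
      have h3 : Ideal.map (σ : R →+* R) (Ideal.map (σ.symm : R →+* R) I)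
          = Ideal.map (σ : R →+* R) I := by rw [this]
      rw [Ideal.map_map] at h3
      have h4 : (σ : R →+* R).comp (σ.symm : R →+* R) = RingHom.id R := by
        ext x; simp
      rw [h4, Ideal.map_id] at h3
      exact h3.symm
  · intro h i hi
    have hmem : σ i ∈ I := by
      rw [← h]; exact Ideal.mem_map_of_mem _ hi
    have hsymm_mem : σ.symm i ∈ I := by
      have : Ideal.map (σ.symm : R →+* R) I = I := by
        conv_lhs => rw [← h]
        rw [Ideal.map_map]
        have h4 : (σ.symm : R →+* R).comp (σ : R →+* R) = RingHom.id R := by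
          ext x; simp
        rw [h4, Ideal.map_id]
      rw [← this]
      exact Ideal.mem_map_of_mem _ hi
    exact ⟨by rw [hsymm]; exact Ideal.mul_mem_right _ _ hsymm_mem,
      Ideal.mul_mem_right _ _ hmem⟩
end

section
/- Let R be a commutative integral domain with a ring automorphism σ and let p, q ∈ R. If I is a (p,q)-invariant ideal of R, then its radical √I = {r ∈ R : r^n ∈ I for some n ≥ 1} is also a (p,q)-invariant ideal; moreover, if I ≠ R then √I ≠ R. -/
/-- The radical of a `(p,q)`-invariant ideal of a domain is again
`(p,q)`-invariant, and the radical of a proper ideal is proper. -/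
theorem stmt_15 {R : Type*} [CommRing R] [IsDomain R] (σ : R ≃+* R) (p q : R)
    (I : Ideal R) (hI : PQInvariant σ p q I) :
    PQInvariant σ p q I.radical ∧ (I ≠ ⊤ → I.radical ≠ ⊤) := by
  constructor
  · intro r hr
    obtain ⟨n, hn⟩ := hr
    constructor
    · refine ⟨n, ?_⟩
      rcases n with _ | m
      · simpa using hn
      · have h1 : σ⁻¹ (r ^ (m + 1)) * p ∈ I := (hI _ hn).1
        rw [map_pow] at h1
        have : (σ⁻¹ r * p) ^ (m + 1) = (σ⁻¹ r ^ (m + 1) * p) * p ^ m := by ring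
        rw [this]
        exact I.mul_mem_right _ h1
    · refine ⟨n, ?_⟩
      rcases n with _ | m
      · simpa using hn
      · have h1 : σ (r ^ (m + 1)) * q ∈ I := (hI _ hn).2
        rw [map_pow] at h1
        have : (σ r * q) ^ (m + 1) = (σ r ^ (m + 1) * q) * q ^ m := by ring
        rw [this]
        exact I.mul_mem_right _ h1
  · intro h hc
    exact h (Ideal.radical_eq_top.mp hc)
end

section
/- Let R be a commutative integral domain with a ring automorphism σ, and let P, P' be n×n matrices over R. Then there exists an R-module automorphism φ of R^n satisfying φ(P·σ^{−1}(v)) = P'·σ^{−1}(φ(v)) for all v ∈ R^n (where σ^{−1} is applied entrywise to vectors) if and only if there exists an invertible matrix S ∈ GL_n(R) such that P' = S·P·σ^{−1}(S)^{−1}, where σ^{−1} is applied entrywise to matrices. -/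
/-- Isomorphism criterion for the rank-`n` `R`-free modules `V_P` over
a GWA: there is an `R`-module automorphism `φ` of `R^n` intertwining the `x`-actions
`v ↦ P·σ⁻¹(v)` and `v ↦ P'·σ⁻¹(v)` iff `P' = S·P·σ⁻¹(S)⁻¹` for some `S ∈ GL_n(R)`. -/
theorem stmt_16 {R : Type*} [CommRing R] [IsDomain R] (σ : R ≃+* R) (n : ℕ)
    (P P' : Matrix (Fin n) (Fin n) R) :
    (∃ φ : (Fin n → R) ≃ₗ[R] (Fin n → R),
        ∀ v : Fin n → R,
          φ (P.mulVec fun i => σ⁻¹ (v i)) = P'.mulVec fun i => σ⁻¹ (φ v i)) ↔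
      ∃ S : Matrix (Fin n) (Fin n) R, IsUnit S.det ∧
        P' = S * P * (S.map fun r => σ⁻¹ r)⁻¹ := by
  have key : ∀ (S : Matrix (Fin n) (Fin n) R) (v : Fin n → R),
      (fun i => (σ⁻¹ : R ≃+* R) (S.mulVec v i)) =
        (S.map fun r => σ⁻¹ r).mulVec (fun i => σ⁻¹ (v i)) := by
    intro S v
    funext i
    exact (σ⁻¹ : R ≃+* R).toRingHom.map_mulVec S v i
  constructor
  · rintro ⟨φ, hφ⟩
    set S : Matrix (Fin n) (Fin n) R := LinearMap.toMatrix' (φ : (Fin n → R) →ₗ[R] (Fin n → R))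
    have hS1 : S * LinearMap.toMatrix' (φ.symm : (Fin n → R) →ₗ[R] (Fin n → R)) = 1 := by
      rw [← LinearMap.toMatrix'_comp]
      simp
    have hSdet : IsUnit S.det := Matrix.isUnit_det_of_right_inverse hS1
    have hφS : ∀ v, φ v = S.mulVec v := by
      intro v
      rw [← Matrix.toLin'_apply, Matrix.toLin'_toMatrix']
      rfl
    -- det of σ⁻¹(S)
    have hdet : ((S.map fun r => σ⁻¹ r).det) = σ⁻¹ S.det := by
      exact (RingHom.map_det (σ⁻¹ : R ≃+* R).toRingHom S).symm
    have hSdet' : IsUnit (S.map fun r => σ⁻¹ r).det := by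
      rw [hdet]
      exact hSdet.map (σ⁻¹ : R ≃+* R).toRingHom
    refine ⟨S, hSdet, ?_⟩
    -- from intertwining with v = σ(w):
    have hmat : S * P = P' * (S.map fun r => σ⁻¹ r) := by
      apply Matrix.ext
      intro i j
      have := hφ (fun k => σ ((Pi.single j (1:R) : Fin n → R) k))
      rw [hφS, hφS] at this
      have h2 : (fun k => (σ⁻¹ : R ≃+* R) (σ ((Pi.single j (1:R) : Fin n → R) k)))
          = (Pi.single j (1:R) : Fin n → R) := by
        funext k; exact σ.symm_apply_apply _
      rw [h2] at this
      have h3 : (fun i => (σ⁻¹ : R ≃+* R)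
            ((S.mulVec fun k => σ ((Pi.single j (1:R) : Fin n → R) k)) i))
          = (S.map fun r => σ⁻¹ r).mulVec (Pi.single j (1:R) : Fin n → R) := by
        rw [key]
        exact congrArg _ (funext fun k => σ.symm_apply_apply _)
      rw [h3] at this
      have := congrFun this i
      simpa [Matrix.mulVec_single, Matrix.mul_apply, Matrix.mulVec, dotProduct,
        Pi.single_apply, mul_comm] using this
    rw [hmat, Matrix.mul_nonsing_inv_cancel_right _ _ hSdet']
  · rintro ⟨S, hSdet, hP'⟩
    have : Invertible S := S.invertibleOfIsUnitDet hSdet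
    refine ⟨S.toLinearEquiv' this, ?_⟩
    intro v
    have happ : ∀ w, S.toLinearEquiv' this w = S.mulVec w := fun w => rfl
    have hSdet' : IsUnit (S.map fun r => σ⁻¹ r).det := by
      have hdet : ((S.map fun r => σ⁻¹ r).det) = σ⁻¹ S.det :=
        (RingHom.map_det (σ⁻¹ : R ≃+* R).toRingHom S).symm
      rw [hdet]
      exact hSdet.map (σ⁻¹ : R ≃+* R).toRingHom
    rw [happ, happ, key, hP', Matrix.mulVec_mulVec, Matrix.mulVec_mulVec,
      Matrix.nonsing_inv_mul_cancel_right _ _ hSdet']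
end

section
/- Let R be a commutative integral domain with a ring automorphism σ, let a ∈ R be nonzero, and let p, p' be divisors of a; set q = σ(a/p) and q' = σ(a/p'). (a) If v ∈ R satisfies p·v = σ^{−1}(v)·p', then also q·v = σ(v)·q'. (b) If there exists a unit v ∈ R with p·v = σ^{−1}(v)·p', then p and p' are associates in R. -/
/-- Homomorphisms between rank-one `R`-free modules `V_p → V_{p'}`
over the GWA `R(σ,a)` (given by `1 ↦ v` with `p·v = σ⁻¹(v)·p'`) automatically intertwine
the `y`-actions, and if such a `v` is a unit then `p` and `p'` are associates. -/
theorem stmt_19 {R : Type*} [CommRing R] [IsDomain R] (σ : R ≃+* R)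
    (a : R) (ha : a ≠ 0) (p r p' r' : R) (hpr : a = p * r) (hpr' : a = p' * r')
    (q q' : R) (hq : q = σ r) (hq' : q' = σ r') :
    (∀ v : R, p * v = σ⁻¹ v * p' → q * v = σ v * q') ∧
      (∀ v : R, IsUnit v → p * v = σ⁻¹ v * p' → Associated p p') := by
  have hp : p ≠ 0 := fun h => ha (by simp [hpr, h])
  constructor
  · intro v hv
    have key : p * (v * r') = p * (σ⁻¹ v * r) := by
      calc p * (v * r') = (p * v) * r' := by ring
        _ = σ⁻¹ v * (p' * r') := by rw [hv]; ring
        _ = σ⁻¹ v * (p * r) := by rw [← hpr', ← hpr]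
        _ = p * (σ⁻¹ v * r) := by ring
    have h2 : v * r' = σ⁻¹ v * r := mul_left_cancel₀ hp key
    have hsv : σ (σ⁻¹ v) = v := σ.apply_symm_apply v
    have h3 : σ v * σ r' = v * σ r := by
      have := congrArg σ h2
      simpa [map_mul, hsv] using this
    rw [hq, hq']
    linear_combination -h3
  · intro v hv heq
    obtain ⟨u, rfl⟩ := hv
    obtain ⟨w, hw⟩ := (Units.isUnit u).map (σ⁻¹ : R ≃+* R)
    refine Associated.symm ⟨w * u⁻¹, ?_⟩
    have h1 : p * u = (w : R) * p' := by rw [heq, hw]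
    calc p' * ↑(w * u⁻¹) = ((w : R) * p') * ↑u⁻¹ := by push_cast; ring
      _ = (p * u) * ↑u⁻¹ := by rw [h1]
      _ = p := by rw [mul_assoc]; simp
end
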